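/- The graph G on V = {x ∈ ℤ^{n+1} : Σx_i = 0, x_i ≡ x_j (mod n+1) ∀i,j}, with x adjacent to y iff y−x is an edge vector, is vertex-transitive under translations by V; consequently, G satisfies the triangle and quadrangle conditions of weak modularity with respect to every base vertex, i.e., G is a weakly modular graph. -/

import Mathlib

open Finset

/-- The vertex set of the 1-skeleton of the Ã_n Coxeter complex:
integer vectors summing to zero with all pairwise coordinate differences divisible by n+1. -/
def inV (n : ℕ) (x : Fin (n+1) → ℤ) : Prop :=
  (∑ i, x i = 0) ∧ ∀ i j, ((n : ℤ) + 1) ∣ x i - x j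

/-- Maximum coordinate. -/
def maxC (n : ℕ) (x : Fin (n+1) → ℤ) : ℤ := univ.sup' univ_nonempty x

/-- Minimum coordinate. -/
def minC (n : ℕ) (x : Fin (n+1) → ℤ) : ℤ := univ.inf' univ_nonempty x

/-- An edge vector: coordinates sum to 0, pairwise differences divisible by n+1,
and max minus min equals n+1. -/
def isEdge (n : ℕ) (e : Fin (n+1) → ℤ) : Prop :=
  inV n e ∧ maxC n e - minC n e = (n : ℤ) + 1

/-- Height of a vertex: (max − min)/(n+1). -/
def height (n : ℕ) (x : Fin (n+1) → ℤ) : ℤ :=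
  (maxC n x - minC n x) / ((n : ℤ) + 1)

/-- The edge vector associated to a subset S: value n+1−|S| on S and −|S| off S. -/
def eVec (n : ℕ) (S : Finset (Fin (n+1))) : Fin (n+1) → ℤ :=
  fun i => if i ∈ S then (n : ℤ) + 1 - S.card else -(S.card : ℤ)

lemma inV_zero (n : ℕ) : inV n 0 := ⟨by simp, fun i j => by simp⟩

lemma maxC_neg (n : ℕ) (x : Fin (n+1) → ℤ) : maxC n (-x) = - minC n x := by
  unfold maxC minC
  apply le_antisymm
  · apply Finset.sup'_le
    intro i hi
    have h1 : univ.inf' univ_nonempty x ≤ x i := Finset.inf'_le _ hi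
    have h2 : (-x) i = -(x i) := rfl
    omega
  · obtain ⟨i, hi, h⟩ := Finset.exists_mem_eq_inf' (univ_nonempty) x
    rw [h]
    have h1 : (-x) i ≤ univ.sup' univ_nonempty (-x) := Finset.le_sup' (-x) hi
    have h2 : (-x) i = -(x i) := rfl
    omega

lemma minC_neg (n : ℕ) (x : Fin (n+1) → ℤ) : minC n (-x) = - maxC n x := by
  have := maxC_neg n (-x)
  rw [neg_neg] at this
  unfold maxC minC at *
  omega

lemma isEdge_neg {n : ℕ} {e : Fin (n+1) → ℤ} (h : isEdge n e) : isEdge n (-e) := by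
  obtain ⟨⟨h1, h2⟩, h3⟩ := h
  refine ⟨⟨by simp [h1], fun i j => by
    have h' : (-e) i - (-e) j = e j - e i := by
      simp only [Pi.neg_apply]; ring
    rw [h']; exact h2 j i⟩, ?_⟩
  rw [maxC_neg, minC_neg]
  omega

/-- The graph G on V with edge-vector adjacency. -/
def G (n : ℕ) : SimpleGraph {x : Fin (n+1) → ℤ // inV n x} where
  Adj x y := isEdge n (y.1 - x.1)
  symm := by
    constructor
    intro x y h
    have := isEdge_neg h
    rwa [neg_sub] at this
  loopless := by
    constructor
    intro x h
    obtain ⟨-, h3⟩ := h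
    rw [sub_self] at h3
    simp [maxC, minC] at h3
    omega

section helpers
variable {n : ℕ}

def Cong (n : ℕ) (z : Fin (n+1) → ℤ) : Prop := ∀ i j, ((n : ℤ) + 1) ∣ z i - z j

lemma le_maxC (x : Fin (n+1) → ℤ) (i : Fin (n+1)) : x i ≤ maxC n x :=
  Finset.le_sup' x (mem_univ i)

lemma minC_le (x : Fin (n+1) → ℤ) (i : Fin (n+1)) : minC n x ≤ x i :=
  Finset.inf'_le x (mem_univ i)

lemma exists_eq_maxC (x : Fin (n+1) → ℤ) : ∃ i, x i = maxC n x := by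
  obtain ⟨i, -, h⟩ := Finset.exists_mem_eq_sup' (univ_nonempty) x
  exact ⟨i, h.symm⟩

lemma exists_eq_minC (x : Fin (n+1) → ℤ) : ∃ i, x i = minC n x := by
  obtain ⟨i, -, h⟩ := Finset.exists_mem_eq_inf' (univ_nonempty) x
  exact ⟨i, h.symm⟩

lemma maxC_le (x : Fin (n+1) → ℤ) (c : ℤ) (h : ∀ i, x i ≤ c) : maxC n x ≤ c :=
  Finset.sup'_le _ _ fun i _ => h i

lemma le_minC (x : Fin (n+1) → ℤ) (c : ℤ) (h : ∀ i, c ≤ x i) : c ≤ minC n x :=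
  Finset.le_inf' _ _ fun i _ => h i

lemma cong_gap {z : Fin (n+1) → ℤ} (hc : Cong n z) {i j : Fin (n+1)} (h : z i < z j) :
    z i + ((n:ℤ)+1) ≤ z j := by
  have h2 := Int.le_of_dvd (by omega) (hc j i)
  omega

lemma eVec_apply (S : Finset (Fin (n+1))) (i : Fin (n+1)) :
    eVec n S i = ((n:ℤ)+1) * (if i ∈ S then 1 else 0) - S.card := by
  unfold eVec; split <;> ring

lemma sum_indicator (S : Finset (Fin (n+1))) :
    ∑ i, (if i ∈ S then (1:ℤ) else 0) = S.card := by
  simp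

lemma sum_eVec (S : Finset (Fin (n+1))) : ∑ i, eVec n S i = 0 := by
  simp only [eVec_apply]
  rw [Finset.sum_sub_distrib, ← Finset.mul_sum, sum_indicator]
  simp [Finset.card_univ]

lemma cong_eVec (S : Finset (Fin (n+1))) : Cong n (eVec n S) := by
  intro i j
  rw [eVec_apply, eVec_apply]
  exact ⟨(if i ∈ S then 1 else 0) - (if j ∈ S then 1 else 0), by ring⟩

lemma inV_eVec (S : Finset (Fin (n+1))) : inV n (eVec n S) := ⟨sum_eVec S, cong_eVec S⟩

lemma card_compl_int (S : Finset (Fin (n+1))) : (((Sᶜ : Finset (Fin (n+1))).card : ℤ)) = (n:ℤ) + 1 - S.card := by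
  have h1 : S.card ≤ n + 1 := by
    have := Finset.card_le_univ S
    simpa using this
  have h2 : (Sᶜ : Finset (Fin (n+1))).card = (n+1) - S.card := by
    simp [Finset.card_compl]
  omega

lemma eVec_compl (S : Finset (Fin (n+1))) : eVec n Sᶜ = - eVec n S := by
  funext i
  simp only [eVec_apply, Finset.mem_compl, card_compl_int, Pi.neg_apply]
  by_cases h : i ∈ S <;> simp [h] <;> ring

lemma maxC_eVec {S : Finset (Fin (n+1))} (h : S.Nonempty) :
    maxC n (eVec n S) = (n:ℤ)+1 - S.card := by
  apply le_antisymm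
  · apply maxC_le
    intro i
    have hc : (0:ℤ) ≤ S.card := Int.ofNat_nonneg _
    by_cases hi : i ∈ S <;> simp [eVec, hi] <;> omega
  · obtain ⟨i, hi⟩ := h
    have := le_maxC (n := n) (eVec n S) i
    simpa [eVec, hi] using this

lemma minC_eVec {S : Finset (Fin (n+1))} (h : S.card ≤ n) :
    minC n (eVec n S) = -(S.card : ℤ) := by
  have hne : (Sᶜ : Finset (Fin (n+1))).Nonempty := by
    rw [← Finset.card_pos, Finset.card_compl]
    simp only [Fintype.card_fin]
    omega
  obtain ⟨i, hi⟩ := hne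
  rw [Finset.mem_compl] at hi
  apply le_antisymm
  · have := minC_le (n := n) (eVec n S) i
    simpa [eVec, hi] using this
  · apply le_minC
    intro j
    by_cases hj : j ∈ S <;> simp [eVec, hj] <;> omega

lemma isEdge_eVec {S : Finset (Fin (n+1))} (h1 : 1 ≤ S.card) (h2 : S.card ≤ n) :
    isEdge n (eVec n S) := by
  refine ⟨inV_eVec S, ?_⟩
  rw [maxC_eVec (Finset.card_pos.mp h1), minC_eVec h2]
  ring

lemma card_le_of_not_mem {Y : Finset (Fin (n+1))} {i : Fin (n+1)} (h : i ∉ Y) : Y.card ≤ n := by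
  have hsub : Y ⊆ univ.erase i := fun j hj => Finset.mem_erase.mpr ⟨fun he => h (he ▸ hj), mem_univ j⟩
  have := Finset.card_le_card hsub
  rw [Finset.card_erase_of_mem (mem_univ i)] at this
  simpa using this

end helpers

section helpers2
variable {n : ℕ}

lemma edge_spec {e : Fin (n+1) → ℤ} (he : isEdge n e) :
    ∃ S : Finset (Fin (n+1)), 1 ≤ S.card ∧ S.card ≤ n ∧ e = eVec n S := by
  classical
  obtain ⟨⟨hsum, hcong⟩, hgap⟩ := he
  have htwo : ∀ i, e i = maxC n e ∨ e i = minC n e := by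
    intro i
    rcases eq_or_lt_of_le (le_maxC e i) with h | h
    · exact Or.inl h
    · right
      obtain ⟨j, hj⟩ := exists_eq_maxC e
      have := cong_gap hcong (show e i < e j by omega)
      have := minC_le e i
      omega
  set S := univ.filter (fun i => e i = maxC n e) with hS
  have hmemS : ∀ i, i ∈ S ↔ e i = maxC n e := by intro i; simp [hS]
  have hnpos : (0:ℤ) < (n:ℤ) + 1 := by positivity
  have hsum1 : ∑ i ∈ S, e i = (S.card : ℤ) * maxC n e := by
    rw [Finset.sum_congr rfl (fun i hi => (hmemS i).mp hi)]
    simp [mul_comm]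
  have hsum2 : ∑ i ∈ Sᶜ, e i = ((Sᶜ : Finset (Fin (n+1))).card : ℤ) * minC n e := by
    have hval : ∀ i ∈ Sᶜ, e i = minC n e := by
      intro i hi
      rcases htwo i with h | h
      · exact absurd ((hmemS i).mpr h) (Finset.mem_compl.mp hi)
      · exact h
    rw [Finset.sum_congr rfl hval]
    simp [mul_comm]
  have hsplit : ∑ i ∈ S, e i + ∑ i ∈ Sᶜ, e i = 0 := by
    rw [Finset.sum_add_sum_compl]; exact hsum
  rw [hsum1, hsum2, card_compl_int] at hsplit
  have hmu : minC n e = -(S.card : ℤ) := by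
    have hM : maxC n e = minC n e + ((n:ℤ)+1) := by omega
    rw [hM] at hsplit
    have h0 : ((n:ℤ)+1) * (minC n e + S.card) = 0 := by linear_combination hsplit
    rcases mul_eq_zero.mp h0 with h | h
    · omega
    · omega
  obtain ⟨i0, hi0⟩ := exists_eq_maxC e
  obtain ⟨j0, hj0⟩ := exists_eq_minC e
  have hj0S : j0 ∉ S := by
    rw [hmemS]
    omega
  refine ⟨S, ?_, ?_, ?_⟩
  · exact Finset.card_pos.mpr ⟨i0, (hmemS i0).mpr hi0⟩
  · exact card_le_of_not_mem hj0S
  · funext i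
    by_cases hi : i ∈ S
    · have := (hmemS i).mp hi
      simp [eVec, hi]
      omega
    · have : e i = minC n e := by
        rcases htwo i with h | h
        · exact absurd ((hmemS i).mpr h) hi
        · exact h
      simp [eVec, hi]
      omega

end helpers2
section helpers3
variable {n : ℕ}

def Hd (n : ℕ) (x : Fin (n+1) → ℤ) : ℤ := maxC n x - minC n x

lemma maxA {z : Fin (n+1) → ℤ} {S : Finset (Fin (n+1))}
    (h : ∃ i ∈ S, z i = maxC n z) :
    maxC n (fun i => z i + eVec n S i) = maxC n z + ((n:ℤ)+1) - S.card := by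
  apply le_antisymm
  · apply maxC_le
    intro i
    have h1 := le_maxC z i
    by_cases hi : i ∈ S <;> simp [eVec, hi] <;> omega
  · obtain ⟨i, hiS, hiM⟩ := h
    have h1 : z i + eVec n S i ≤ maxC n (fun j => z j + eVec n S j) :=
      le_maxC (fun j => z j + eVec n S j) i
    have hv : eVec n S i = ((n:ℤ)+1) - S.card := by simp [eVec, hiS]
    rw [hv] at h1
    omega

lemma maxB {z : Fin (n+1) → ℤ} {S : Finset (Fin (n+1))} (hc : Cong n z)
    (h : ∀ i ∈ S, z i ≠ maxC n z) :
    maxC n (fun i => z i + eVec n S i) = maxC n z - S.card := by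
  apply le_antisymm
  · apply maxC_le
    intro i
    by_cases hi : i ∈ S
    · obtain ⟨j, hj⟩ := exists_eq_maxC z
      have h1 : z i < z j := by
        have := le_maxC z i
        have := h i hi
        omega
      have h2 := cong_gap hc h1
      simp [eVec, hi]
      omega
    · have := le_maxC z i
      simp [eVec, hi]
      omega
  · obtain ⟨j, hj⟩ := exists_eq_maxC z
    have hjS : j ∉ S := fun hjS => h j hjS hj
    have h1 : z j + eVec n S j ≤ maxC n (fun i => z i + eVec n S i) :=
      le_maxC (fun i => z i + eVec n S i) j
    have hv : eVec n S j = -(S.card:ℤ) := by simp [eVec, hjS]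
    rw [hv] at h1
    omega

lemma minA {z : Fin (n+1) → ℤ} {S : Finset (Fin (n+1))} (hc : Cong n z)
    (h : ∀ i, z i = minC n z → i ∈ S) :
    minC n (fun i => z i + eVec n S i) = minC n z + ((n:ℤ)+1) - S.card := by
  apply le_antisymm
  · obtain ⟨j, hj⟩ := exists_eq_minC z
    have hjS : j ∈ S := h j hj
    have h1 : minC n (fun i => z i + eVec n S i) ≤ z j + eVec n S j :=
      minC_le (fun i => z i + eVec n S i) j
    have hv : eVec n S j = ((n:ℤ)+1) - S.card := by simp [eVec, hjS]
    rw [hv] at h1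
    omega
  · apply le_minC
    intro i
    by_cases hi : i ∈ S
    · have := minC_le z i
      simp [eVec, hi]
      omega
    · obtain ⟨j, hj⟩ := exists_eq_minC z
      have h1 : z j < z i := by
        have h2 := minC_le z i
        have h3 : z i ≠ minC n z := fun hq => hi (h i hq)
        omega
      have h2 := cong_gap hc h1
      simp [eVec, hi]
      omega

lemma minB {z : Fin (n+1) → ℤ} {S : Finset (Fin (n+1))}
    (h : ∃ i, i ∉ S ∧ z i = minC n z) :
    minC n (fun i => z i + eVec n S i) = minC n z - S.card := by
  apply le_antisymm
  · obtain ⟨i, hiS, hiM⟩ := h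
    have h1 : minC n (fun j => z j + eVec n S j) ≤ z i + eVec n S i :=
      minC_le (fun j => z j + eVec n S j) i
    have hv : eVec n S i = -(S.card:ℤ) := by simp [eVec, hiS]
    rw [hv] at h1
    omega
  · apply le_minC
    intro i
    have h1 := minC_le z i
    by_cases hi : i ∈ S <;> simp [eVec, hi] <;> omega

lemma hd_nonneg (x : Fin (n+1) → ℤ) : 0 ≤ Hd n x := by
  unfold Hd
  have h1 := le_maxC x ⟨0, Nat.succ_pos n⟩
  have h2 := minC_le x ⟨0, Nat.succ_pos n⟩
  omega

lemma maxC_add_le (x y : Fin (n+1) → ℤ) :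
    maxC n (fun i => x i + y i) ≤ maxC n x + maxC n y :=
  maxC_le _ _ fun i => add_le_add (le_maxC x i) (le_maxC y i)

lemma le_minC_add (x y : Fin (n+1) → ℤ) :
    minC n x + minC n y ≤ minC n (fun i => x i + y i) :=
  le_minC _ _ fun i => add_le_add (minC_le x i) (minC_le y i)

lemma hd_lip1 {e : Fin (n+1) → ℤ} (he : isEdge n e) (z : Fin (n+1) → ℤ) :
    Hd n (fun i => z i + e i) ≤ Hd n z + ((n:ℤ)+1) := by
  have h1 := maxC_add_le z e
  have h2 := le_minC_add z e
  have h3 := he.2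
  unfold Hd
  omega

lemma hd_lip2 {e : Fin (n+1) → ℤ} (he : isEdge n e) (z : Fin (n+1) → ℤ) :
    Hd n z ≤ Hd n (fun i => z i + e i) + ((n:ℤ)+1) := by
  have h1 := hd_lip1 (isEdge_neg he) (fun i => z i + e i)
  have h2 : (fun i => (fun i => z i + e i) i + (-e) i) = z := by
    funext i; simp
  rw [h2] at h1
  exact h1

lemma inV_sub {x y : Fin (n+1) → ℤ} (hx : inV n x) (hy : inV n y) :
    inV n (fun i => y i - x i) := by
  constructor
  · rw [Finset.sum_sub_distrib, hy.1, hx.1]; ring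
  · intro i j
    have h := dvd_sub (hy.2 i j) (hx.2 i j)
    convert h using 1
    · rfl
    · ring

lemma inV_add {x y : Fin (n+1) → ℤ} (hx : inV n x) (hy : inV n y) :
    inV n (fun i => x i + y i) := by
  constructor
  · rw [Finset.sum_add_distrib, hy.1, hx.1]; ring
  · intro i j
    have h := dvd_add (hx.2 i j) (hy.2 i j)
    convert h using 1
    · rfl
    · ring

lemma drop_cond {z : Fin (n+1) → ℤ} {S : Finset (Fin (n+1))} (hc : Cong n z)
    (h : Hd n (fun i => z i + eVec n S i) = Hd n z - ((n:ℤ)+1)) :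
    (∀ i ∈ S, z i ≠ maxC n z) ∧ (∀ i, z i = minC n z → i ∈ S) := by
  have hpos : (0:ℤ) < (n:ℤ)+1 := by positivity
  unfold Hd at h
  by_cases h1 : ∃ i ∈ S, z i = maxC n z
  · exfalso
    have hA := maxA h1
    by_cases h2 : ∀ i, z i = minC n z → i ∈ S
    · have hB := minA hc h2
      omega
    · push_neg at h2
      obtain ⟨i, hi1, hi2⟩ := h2
      have hB := minB ⟨i, hi2, hi1⟩
      omega
  · push_neg at h1
    have hA := maxB hc h1
    by_cases h2 : ∀ i, z i = minC n z → i ∈ S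
    · exact ⟨h1, h2⟩
    · exfalso
      push_neg at h2
      obtain ⟨i, hi1, hi2⟩ := h2
      have hB := minB ⟨i, hi2, hi1⟩
      omega

lemma same_cond {z : Fin (n+1) → ℤ} {S : Finset (Fin (n+1))} (hc : Cong n z)
    (h : Hd n (fun i => z i + eVec n S i) = Hd n z) :
    ((∃ i ∈ S, z i = maxC n z) ∧ (∀ i, z i = minC n z → i ∈ S)) ∨
    ((∀ i ∈ S, z i ≠ maxC n z) ∧ (∃ i, i ∉ S ∧ z i = minC n z)) := by
  have hpos : (0:ℤ) < (n:ℤ)+1 := by positivity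
  unfold Hd at h
  by_cases h1 : ∃ i ∈ S, z i = maxC n z
  · left
    refine ⟨h1, ?_⟩
    have hA := maxA h1
    by_cases h2 : ∀ i, z i = minC n z → i ∈ S
    · exact h2
    · exfalso
      push_neg at h2
      obtain ⟨i, hi1, hi2⟩ := h2
      have hB := minB ⟨i, hi2, hi1⟩
      omega
  · right
    push_neg at h1
    refine ⟨h1, ?_⟩
    have hA := maxB hc h1
    by_cases h2 : ∀ i, z i = minC n z → i ∈ S
    · exfalso
      have hB := minA hc h2
      omega
    · push_neg at h2
      obtain ⟨i, hi1, hi2⟩ := h2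
      exact ⟨i, hi2, hi1⟩

end helpers3
section helpers4
variable {n : ℕ}

lemma maxC_const (c : ℤ) : maxC n (fun _ => c) = c := by
  apply le_antisymm
  · exact maxC_le _ _ fun _ => le_rfl
  · exact le_maxC (n := n) (fun _ => c) ⟨0, Nat.succ_pos n⟩

lemma minC_const (c : ℤ) : minC n (fun _ => c) = c := by
  apply le_antisymm
  · exact minC_le (n := n) (fun _ => c) ⟨0, Nat.succ_pos n⟩
  · exact le_minC _ _ fun _ => le_rfl

lemma walk_lower (x y : {x : Fin (n+1) → ℤ // inV n x}) (p : (G n).Walk x y) :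
    Hd n (fun i => y.1 i - x.1 i) ≤ ((n:ℤ)+1) * p.length := by
  induction p with
  | nil =>
    simp only [SimpleGraph.Walk.length_nil, Nat.cast_zero, mul_zero]
    have hgen : ∀ (w : {x : Fin (n+1) → ℤ // inV n x}), Hd n (fun i => w.1 i - w.1 i) ≤ 0 := by
      intro w
      have h0 : (fun i => w.1 i - w.1 i) = (fun _ : Fin (n+1) => (0:ℤ)) := by funext i; ring
      rw [h0]
      unfold Hd
      rw [maxC_const, minC_const]
      simp
    exact hgen _
  | @cons a b c hadj q ih =>
    have hadj' : isEdge n (b.1 - a.1) := hadj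
    have key := hd_lip1 hadj' (fun i => c.1 i - b.1 i)
    have heq : (fun i => (fun i => c.1 i - b.1 i) i + (b.1 - a.1) i) = (fun i => c.1 i - a.1 i) := by
      funext i; simp
    rw [heq] at key
    rw [SimpleGraph.Walk.length_cons]
    push_cast
    linarith

lemma walk_exists : ∀ (m : ℕ) (x y : {x : Fin (n+1) → ℤ // inV n x}),
    Hd n (fun i => y.1 i - x.1 i) = (m : ℤ) * ((n:ℤ)+1) →
    ∃ p : (G n).Walk x y, p.length = m := by
  intro m
  induction m with
  | zero =>
    intro x y h
    have hz := inV_sub x.2 y.2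
    set z := (fun i => y.1 i - x.1 i) with hzdef
    have hxy : x = y := by
      have hall : ∀ i, z i = maxC n z := by
        intro i
        have h1 := le_maxC z i
        have h2 := minC_le z i
        unfold Hd at h
        omega
      have hsum : ∑ i, z i = 0 := hz.1
      have hsum2 : ∑ i, z i = ((n:ℤ)+1) * maxC n z := by
        rw [Finset.sum_congr rfl (fun i _ => hall i)]
        simp [Finset.card_univ, mul_comm]
      have hM : maxC n z = 0 := by
        have hpos : (0:ℤ) < (n:ℤ)+1 := by positivity
        have := hsum2.symm.trans hsum
        rcases mul_eq_zero.mp this with h' | h'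
        · omega
        · exact h'
      apply Subtype.ext
      funext i
      have := hall i
      rw [hM] at this
      have : y.1 i - x.1 i = 0 := this
      omega
    subst hxy
    exact ⟨SimpleGraph.Walk.nil, rfl⟩
  | succ m ih =>
    intro x y h
    have hz := inV_sub x.2 y.2
    set z := (fun i => y.1 i - x.1 i) with hzdef
    have hpos : (0:ℤ) < (n:ℤ)+1 := by positivity
    have hHd : Hd n z = ((m:ℤ)+1) * ((n:ℤ)+1) := by rw [h]; push_cast; ring
    have hgap : minC n z < maxC n z := by
      have h2 : (0:ℤ) < ((m:ℤ)+1) * ((n:ℤ)+1) := by positivity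
      unfold Hd at hHd
      omega
    classical
    set T := univ.filter (fun i => z i = maxC n z) with hT
    have hmemT : ∀ i, i ∈ T ↔ z i = maxC n z := by intro i; simp [hT]
    obtain ⟨i0, hi0⟩ := exists_eq_maxC z
    obtain ⟨j0, hj0⟩ := exists_eq_minC z
    have hT1 : 1 ≤ T.card := Finset.card_pos.mpr ⟨i0, (hmemT i0).mpr hi0⟩
    have hj0T : j0 ∉ T := by rw [hmemT]; omega
    have hT2 : T.card ≤ n := card_le_of_not_mem hj0T
    set x' : {x : Fin (n+1) → ℤ // inV n x} :=
      ⟨fun i => x.1 i + eVec n T i, inV_add x.2 (inV_eVec T)⟩ with hx'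
    have hadj : (G n).Adj x x' := by
      show isEdge n (x'.1 - x.1)
      have heq : x'.1 - x.1 = eVec n T := by funext i; simp [hx']
      rw [heq]
      exact isEdge_eVec hT1 hT2
    have hstep : (fun i => y.1 i - x'.1 i) = (fun i => z i + eVec n Tᶜ i) := by
      funext i
      rw [eVec_compl]
      simp [hx', hzdef]
      ring
    have hmax' : maxC n (fun i => z i + eVec n Tᶜ i) = maxC n z - (Tᶜ : Finset (Fin (n+1))).card := by
      apply maxB hz.2
      intro i hi
      rw [Finset.mem_compl, hmemT] at hi
      exact hi
    have hmin' : minC n (fun i => z i + eVec n Tᶜ i) = minC n z + ((n:ℤ)+1) - (Tᶜ : Finset (Fin (n+1))).card := by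
      apply minA hz.2
      intro i hi
      rw [Finset.mem_compl, hmemT]
      omega
    have hHd' : Hd n (fun i => y.1 i - x'.1 i) = (m:ℤ) * ((n:ℤ)+1) := by
      rw [hstep]
      unfold Hd at hHd ⊢
      rw [hmax', hmin']
      linear_combination hHd
    obtain ⟨q, hq⟩ := ih x' y hHd'
    exact ⟨SimpleGraph.Walk.cons hadj q, by simp [hq]⟩

lemma dist_formula (x y : {x : Fin (n+1) → ℤ // inV n x}) (m : ℕ)
    (h : Hd n (fun i => y.1 i - x.1 i) = (m : ℤ) * ((n:ℤ)+1)) :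
    (G n).dist x y = m := by
  obtain ⟨p, hp⟩ := walk_exists m x y h
  have h1 : (G n).dist x y ≤ m := hp ▸ SimpleGraph.dist_le p
  have hr : (G n).Reachable x y := ⟨p⟩
  obtain ⟨q, hq⟩ := hr.exists_walk_length_eq_dist
  have h2 := walk_lower x y q
  rw [hq, h] at h2
  have hpos : (0:ℤ) < (n:ℤ)+1 := by positivity
  have h3 : (m:ℤ) ≤ ((G n).dist x y : ℤ) := by
    apply le_of_mul_le_mul_right _ hpos
    calc (m:ℤ) * ((n:ℤ)+1) ≤ ((n:ℤ)+1) * ((G n).dist x y : ℤ) := h2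
      _ = ((G n).dist x y : ℤ) * ((n:ℤ)+1) := by ring
  omega

lemma exists_hd_nat (x y : {x : Fin (n+1) → ℤ // inV n x}) :
    ∃ m : ℕ, Hd n (fun i => y.1 i - x.1 i) = (m : ℤ) * ((n:ℤ)+1) := by
  have hz := inV_sub x.2 y.2
  set z := (fun i => y.1 i - x.1 i) with hzdef
  obtain ⟨i0, hi0⟩ := exists_eq_maxC z
  obtain ⟨j0, hj0⟩ := exists_eq_minC z
  have hdvd : ((n:ℤ)+1) ∣ Hd n z := by
    unfold Hd
    rw [← hi0, ← hj0]
    exact hz.2 i0 j0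
  have hn := hd_nonneg (n := n) z
  obtain ⟨t, ht⟩ := hdvd
  have hpos : (0:ℤ) < (n:ℤ)+1 := by positivity
  have ht0 : 0 ≤ t := by nlinarith
  refine ⟨t.toNat, ?_⟩
  rw [ht, Int.toNat_of_nonneg ht0]
  ring

lemma dist_to_hd (x y : {x : Fin (n+1) → ℤ // inV n x}) (m : ℕ)
    (h : (G n).dist x y = m) :
    Hd n (fun i => y.1 i - x.1 i) = (m : ℤ) * ((n:ℤ)+1) := by
  obtain ⟨m', hm'⟩ := exists_hd_nat x y
  have := dist_formula x y m' hm'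
  rw [h] at this
  subst this
  exact hm'

end helpers4
section helpers5
variable {n : ℕ}

lemma eVec_sdiff {S U : Finset (Fin (n+1))} (h : U ⊆ S) :
    (fun i => eVec n S i - eVec n U i) = eVec n (S \ U) := by
  have hle := Finset.card_le_card h
  have hcard : ((S \ U).card : ℤ) = (S.card : ℤ) - U.card := by
    rw [Finset.card_sdiff_of_subset h]
    omega
  funext i
  by_cases hU : i ∈ U
  · have hS : i ∈ S := h hU
    have hSD : i ∉ S \ U := by simp [hU]
    simp only [eVec, if_pos hU, if_pos hS, if_neg hSD]
    omega
  · by_cases hS : i ∈ S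
    · have hSD : i ∈ S \ U := by simp [hS, hU]
      simp only [eVec, if_pos hS, if_neg hU, if_pos hSD]
      omega
    · have hSD : i ∉ S \ U := by simp [hS]
      simp only [eVec, if_neg hS, if_neg hU, if_neg hSD]
      omega

lemma triangle_diff {a b : Fin (n+1) → ℤ} (ha : inV n a) (hb : inV n b) (m : ℕ) (hm : 1 ≤ m)
    (hda : Hd n a = (m:ℤ) * ((n:ℤ)+1)) (hdb : Hd n b = (m:ℤ) * ((n:ℤ)+1))
    (he : isEdge n (fun i => b i - a i)) :
    ∃ c : Fin (n+1) → ℤ, inV n c ∧ isEdge n (fun i => c i - a i) ∧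
      isEdge n (fun i => c i - b i) ∧ Hd n c = ((m:ℤ) - 1) * ((n:ℤ)+1) := by
  classical
  have hpos : (0:ℤ) < (n:ℤ)+1 := by positivity
  have hm' : (1:ℤ) ≤ (m:ℤ) := by exact_mod_cast hm
  obtain ⟨S, hS1, hS2, hSe⟩ := edge_spec he
  have hblam : b = fun i => a i + eVec n S i := by
    funext i
    have h0 := congrFun hSe i
    omega
  have hMgap : minC n a < maxC n a := by
    unfold Hd at hda
    nlinarith
  have hsame : Hd n (fun i => a i + eVec n S i) = Hd n a := by rw [← hblam, hda, hdb]
  rcases same_cond ha.2 hsame with ⟨h1, h2⟩ | ⟨h1, h2⟩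
  · -- Case 1: S meets argmax a, argmin a ⊆ S
    set U := S.filter (fun i => a i = maxC n a) with hU
    have hmemU : ∀ i, i ∈ U ↔ (i ∈ S ∧ a i = maxC n a) := by intro i; simp [hU]
    obtain ⟨i1, hi1S, hi1M⟩ := h1
    have hU1 : 1 ≤ U.card := Finset.card_pos.mpr ⟨i1, (hmemU i1).mpr ⟨hi1S, hi1M⟩⟩
    have hUS : U ⊆ S := Finset.filter_subset _ _
    obtain ⟨j0, hj0⟩ := exists_eq_minC a
    have hj0S : j0 ∈ S := h2 j0 hj0
    have hj0U : j0 ∉ U := by rw [hmemU]; push_neg; intro _; omega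
    have hSU : (S \ U).Nonempty := ⟨j0, Finset.mem_sdiff.mpr ⟨hj0S, hj0U⟩⟩
    have hU2 : U.card ≤ n := le_trans (Finset.card_le_card hUS) hS2
    have hUc := card_compl_int U
    set c : Fin (n+1) → ℤ := fun i => b i + eVec n Uᶜ i with hc
    have hcb : (fun i => c i - b i) = eVec n Uᶜ := by funext i; simp [hc]
    have hca : (fun i => c i - a i) = eVec n (S \ U) := by
      funext i
      have hbi : b i = a i + eVec n S i := congrFun hblam i
      have h4 : eVec n S i - eVec n U i = eVec n (S \ U) i := congrFun (eVec_sdiff hUS) i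
      have h5 : eVec n Uᶜ i = - eVec n U i := by
        have := congrFun (eVec_compl U) i
        simpa using this
      show b i + eVec n Uᶜ i - a i = eVec n (S \ U) i
      rw [hbi, h5]
      omega
    have hmaxb : maxC n b = maxC n a + ((n:ℤ)+1) - S.card := by
      rw [hblam]; exact maxA ⟨i1, hi1S, hi1M⟩
    have hminb : minC n b = minC n a + ((n:ℤ)+1) - S.card := by
      rw [hblam]; exact minA ha.2 h2
    have hmaxcond : ∀ i ∈ Uᶜ, b i ≠ maxC n b := by
      intro i hi
      rw [Finset.mem_compl, hmemU] at hi
      push_neg at hi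
      have hbi : b i = a i + eVec n S i := congrFun hblam i
      by_cases hiS : i ∈ S
      · have h6 : a i ≠ maxC n a := hi hiS
        have h7 := le_maxC a i
        simp only [eVec, if_pos hiS] at hbi
        omega
      · have h7 := le_maxC a i
        simp only [eVec, if_neg hiS] at hbi
        omega
    have hmincond : ∀ i, b i = minC n b → i ∈ Uᶜ := by
      intro i hbMin
      rw [Finset.mem_compl, hmemU]
      push_neg
      intro hiS hiM
      exfalso
      have hbi : b i = a i + eVec n S i := congrFun hblam i
      simp only [eVec, if_pos hiS] at hbi
      omega
    have hmaxc := maxB hb.2 hmaxcond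
    have hminc := minA hb.2 hmincond
    refine ⟨c, ?_, ?_, ?_, ?_⟩
    · exact inV_add hb (inV_eVec Uᶜ)
    · rw [hca]
      refine isEdge_eVec ?_ ?_
      · exact Finset.card_pos.mpr hSU
      · exact le_trans (Finset.card_le_card Finset.sdiff_subset) hS2
    · rw [hcb]
      refine isEdge_eVec (by omega) (by omega)
    · have : Hd n c = Hd n b - ((n:ℤ)+1) := by
        unfold Hd
        rw [show c = (fun i => b i + eVec n Uᶜ i) from rfl] at *
        rw [hmaxc, hminc]
        ring
      rw [this, hdb]
      ring
  · -- Case 2: S misses argmax a, some argmin a off S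
    set Y := S ∪ univ.filter (fun i => a i = minC n a) with hY
    have hmemY : ∀ i, i ∈ Y ↔ (i ∈ S ∨ a i = minC n a) := by intro i; simp [hY]
    have hSY : S ⊆ Y := Finset.subset_union_left
    obtain ⟨i0, hi0⟩ := exists_eq_maxC a
    have hi0Y : i0 ∉ Y := by
      rw [hmemY]
      push_neg
      exact ⟨fun hS' => absurd hi0 (h1 i0 hS'), by omega⟩
    have hY2 : Y.card ≤ n := card_le_of_not_mem hi0Y
    have hY1 : 1 ≤ Y.card := le_trans hS1 (Finset.card_le_card hSY)
    obtain ⟨j1, hj1S, hj1m⟩ := h2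
    have hj1Y : j1 ∈ Y := (hmemY j1).mpr (Or.inr hj1m)
    have hYS : (Y \ S).Nonempty := ⟨j1, Finset.mem_sdiff.mpr ⟨hj1Y, hj1S⟩⟩
    set c : Fin (n+1) → ℤ := fun i => a i + eVec n Y i with hc
    have hca : (fun i => c i - a i) = eVec n Y := by funext i; simp [hc]
    have hcb : (fun i => c i - b i) = eVec n (Y \ S) := by
      funext i
      have hbi : b i = a i + eVec n S i := congrFun hblam i
      have h4 : eVec n Y i - eVec n S i = eVec n (Y \ S) i := congrFun (eVec_sdiff hSY) i
      show a i + eVec n Y i - b i = eVec n (Y \ S) i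
      rw [hbi]
      omega
    have hmaxcond : ∀ i ∈ Y, a i ≠ maxC n a := by
      intro i hi
      rcases (hmemY i).mp hi with h' | h'
      · exact h1 i h'
      · omega
    have hmincond : ∀ i, a i = minC n a → i ∈ Y := fun i h' => (hmemY i).mpr (Or.inr h')
    have hmaxc := maxB ha.2 hmaxcond
    have hminc := minA ha.2 hmincond
    refine ⟨c, ?_, ?_, ?_, ?_⟩
    · exact inV_add ha (inV_eVec Y)
    · rw [hca]
      exact isEdge_eVec hY1 hY2
    · rw [hcb]
      refine isEdge_eVec (Finset.card_pos.mpr hYS)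
        (le_trans (Finset.card_le_card Finset.sdiff_subset) hY2)
    · have : Hd n c = Hd n a - ((n:ℤ)+1) := by
        unfold Hd
        rw [show c = (fun i => a i + eVec n Y i) from rfl] at *
        rw [hmaxc, hminc]
        ring
      rw [this, hda]
      ring

end helpers5
section helpers6
variable {n : ℕ}

lemma quad_diff {a b s : Fin (n+1) → ℤ} (ha : inV n a) (hb : inV n b) (hs : inV n s)
    (m : ℕ) (hm : 1 ≤ m)
    (hda : Hd n a = (m:ℤ) * ((n:ℤ)+1)) (hdb : Hd n b = (m:ℤ) * ((n:ℤ)+1))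
    (hds : Hd n s = ((m:ℤ)+1) * ((n:ℤ)+1))
    (hea : isEdge n (fun i => a i - s i)) (heb : isEdge n (fun i => b i - s i)) :
    ∃ c : Fin (n+1) → ℤ, inV n c ∧ isEdge n (fun i => c i - a i) ∧
      isEdge n (fun i => c i - b i) ∧ Hd n c = ((m:ℤ) - 1) * ((n:ℤ)+1) := by
  classical
  have hpos : (0:ℤ) < (n:ℤ)+1 := by positivity
  have hm' : (1:ℤ) ≤ (m:ℤ) := by exact_mod_cast hm
  obtain ⟨P, hP1, hP2, hPe⟩ := edge_spec hea
  obtain ⟨Q, hQ1, hQ2, hQe⟩ := edge_spec heb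
  have haP : ∀ i, a i = s i + eVec n P i := by
    intro i; have h0 := congrFun hPe i; omega
  have hbQ : ∀ i, b i = s i + eVec n Q i := by
    intro i; have h0 := congrFun hQe i; omega
  have halam : (fun i => s i + eVec n P i) = a := by funext i; rw [haP i]
  have hblam : (fun i => s i + eVec n Q i) = b := by funext i; rw [hbQ i]
  have hdropP : Hd n (fun i => s i + eVec n P i) = Hd n s - ((n:ℤ)+1) := by
    rw [halam, hda, hds]; ring
  have hdropQ : Hd n (fun i => s i + eVec n Q i) = Hd n s - ((n:ℤ)+1) := by
    rw [hblam, hdb, hds]; ring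
  obtain ⟨hPmax, hPmin⟩ := drop_cond hs.2 hdropP
  obtain ⟨hQmax, hQmin⟩ := drop_cond hs.2 hdropQ
  obtain ⟨i0, hi0⟩ := exists_eq_maxC s
  obtain ⟨j0, hj0⟩ := exists_eq_minC s
  have hMμ : maxC n s - minC n s = ((m:ℤ)+1) * ((n:ℤ)+1) := hds
  have hgap1 : minC n s + ((n:ℤ)+1) < maxC n s := by
    nlinarith [mul_le_mul_of_nonneg_right hm' (le_of_lt hpos)]
  set g : Fin (n+1) → ℤ := fun i =>
    if s i = minC n s then 2
    else if (s i = minC n s + ((n:ℤ)+1) ∨ i ∈ P ∪ Q) then 1 else 0 with hg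
  have hgeval : ∀ i, g i = (if s i = minC n s then 2
      else if (s i = minC n s + ((n:ℤ)+1) ∨ i ∈ P ∪ Q) then 1 else 0) := fun i => by rw [hg]
  have hgP : ∀ i, g i = (if i ∈ P then (1:ℤ) else 0) ∨
      g i = (if i ∈ P then (1:ℤ) else 0) + 1 := by
    intro i
    by_cases h0 : s i = minC n s
    · have hiP : i ∈ P := hPmin i h0
      right; rw [hgeval i, if_pos h0, if_pos hiP]; norm_num
    · by_cases h1 : (s i = minC n s + ((n:ℤ)+1) ∨ i ∈ P ∪ Q)
      · by_cases hiP : i ∈ P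
        · left; rw [hgeval i, if_neg h0, if_pos h1, if_pos hiP]
        · right; rw [hgeval i, if_neg h0, if_pos h1, if_neg hiP]; norm_num
      · have hiP : i ∉ P := fun hc' => h1 (Or.inr (Finset.mem_union_left _ hc'))
        left; rw [hgeval i, if_neg h0, if_neg h1, if_neg hiP]
  have hgQ : ∀ i, g i = (if i ∈ Q then (1:ℤ) else 0) ∨
      g i = (if i ∈ Q then (1:ℤ) else 0) + 1 := by
    intro i
    by_cases h0 : s i = minC n s
    · have hiQ : i ∈ Q := hQmin i h0
      right; rw [hgeval i, if_pos h0, if_pos hiQ]; norm_num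
    · by_cases h1 : (s i = minC n s + ((n:ℤ)+1) ∨ i ∈ P ∪ Q)
      · by_cases hiQ : i ∈ Q
        · left; rw [hgeval i, if_neg h0, if_pos h1, if_pos hiQ]
        · right; rw [hgeval i, if_neg h0, if_pos h1, if_neg hiQ]; norm_num
      · have hiQ : i ∉ Q := fun hc' => h1 (Or.inr (Finset.mem_union_right _ hc'))
        left; rw [hgeval i, if_neg h0, if_neg h1, if_neg hiQ]
  set Y := univ.filter (fun i => g i = (if i ∈ P then (1:ℤ) else 0) + 1) with hYdef
  set Z := univ.filter (fun i => g i = (if i ∈ Q then (1:ℤ) else 0) + 1) with hZdef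
  have hYmem : ∀ i, i ∈ Y ↔ g i = (if i ∈ P then (1:ℤ) else 0) + 1 := by
    intro i; simp [hYdef]
  have hZmem : ∀ i, i ∈ Z ↔ g i = (if i ∈ Q then (1:ℤ) else 0) + 1 := by
    intro i; simp [hZdef]
  have hYind : ∀ i, g i = (if i ∈ P then (1:ℤ) else 0) + (if i ∈ Y then (1:ℤ) else 0) := by
    intro i
    by_cases hiY : i ∈ Y
    · rw [if_pos hiY]; exact (hYmem i).mp hiY
    · rw [if_neg hiY, add_zero]
      rcases hgP i with h' | h'
      · exact h'
      · exact absurd ((hYmem i).mpr h') hiY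
  have hZind : ∀ i, g i = (if i ∈ Q then (1:ℤ) else 0) + (if i ∈ Z then (1:ℤ) else 0) := by
    intro i
    by_cases hiZ : i ∈ Z
    · rw [if_pos hiZ]; exact (hZmem i).mp hiZ
    · rw [if_neg hiZ, add_zero]
      rcases hgQ i with h' | h'
      · exact h'
      · exact absurd ((hZmem i).mpr h') hiZ
  have hsumY : ∑ i, g i = (P.card : ℤ) + Y.card := by
    rw [Finset.sum_congr rfl (fun i _ => hYind i), Finset.sum_add_distrib,
      sum_indicator, sum_indicator]
  have hsumZ : ∑ i, g i = (Q.card : ℤ) + Z.card := by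
    rw [Finset.sum_congr rfl (fun i _ => hZind i), Finset.sum_add_distrib,
      sum_indicator, sum_indicator]
  set c : Fin (n+1) → ℤ := fun i => a i + eVec n Y i with hc
  have hcs : ∀ i, c i = s i + ((n:ℤ)+1) * g i - ((P.card:ℤ) + Y.card) := by
    intro i
    show a i + eVec n Y i = _
    rw [haP i, eVec_apply, eVec_apply, hYind i]
    ring
  have hca : (fun i => c i - a i) = eVec n Y := by funext i; simp [hc]
  have hcb : (fun i => c i - b i) = eVec n Z := by
    funext i
    show a i + eVec n Y i - b i = eVec n Z i
    rw [haP i, hbQ i, eVec_apply, eVec_apply, eVec_apply, eVec_apply]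
    have e1 := hYind i
    have e2 := hZind i
    linear_combination ((n:ℤ)+1) * e2 - ((n:ℤ)+1) * e1 + hsumY - hsumZ
  have hgi0 : g i0 = 0 := by
    have h1 : s i0 ≠ minC n s := by omega
    have h2 : ¬(s i0 = minC n s + ((n:ℤ)+1) ∨ i0 ∈ P ∪ Q) := by
      rintro (h' | h')
      · omega
      · rcases Finset.mem_union.mp h' with h'' | h''
        · exact hPmax i0 h'' hi0
        · exact hQmax i0 h'' hi0
    rw [hgeval i0, if_neg h1, if_neg h2]
  have hgj0 : g j0 = 2 := by rw [hgeval j0, if_pos hj0]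
  have hi0Y : i0 ∉ Y := by
    intro hmem
    have := (hYmem i0).mp hmem
    rw [hgi0] at this
    by_cases h' : i0 ∈ P <;> simp [h'] at this
  have hi0Z : i0 ∉ Z := by
    intro hmem
    have := (hZmem i0).mp hmem
    rw [hgi0] at this
    by_cases h' : i0 ∈ Q <;> simp [h'] at this
  have hY2 : Y.card ≤ n := card_le_of_not_mem hi0Y
  have hZ2 : Z.card ≤ n := card_le_of_not_mem hi0Z
  have hj0Y : j0 ∈ Y := by
    refine (hYmem j0).mpr ?_
    rw [hgj0, if_pos (hPmin j0 hj0)]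
    norm_num
  have hj0Z : j0 ∈ Z := by
    refine (hZmem j0).mpr ?_
    rw [hgj0, if_pos (hQmin j0 hj0)]
    norm_num
  have hY1 : 1 ≤ Y.card := Finset.card_pos.mpr ⟨j0, hj0Y⟩
  have hZ1 : 1 ≤ Z.card := Finset.card_pos.mpr ⟨j0, hj0Z⟩
  have hwin_hi : ∀ i, s i + ((n:ℤ)+1) * g i ≤ minC n s + ((m:ℤ)+1) * ((n:ℤ)+1) := by
    intro i
    have hle := le_maxC s i
    by_cases h0 : s i = minC n s
    · have hgi : g i = 2 := by rw [hgeval i, if_pos h0]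
      rw [hgi, h0]
      linarith [mul_le_mul_of_nonneg_right hm' (le_of_lt hpos)]
    · by_cases h1 : (s i = minC n s + ((n:ℤ)+1) ∨ i ∈ P ∪ Q)
      · have hgi : g i = 1 := by rw [hgeval i, if_neg h0, if_pos h1]
        rw [hgi]
        rcases h1 with h' | h'
        · rw [h']; linarith [mul_le_mul_of_nonneg_right hm' (le_of_lt hpos)]
        · have hsM : s i ≠ maxC n s := by
            rcases Finset.mem_union.mp h' with h'' | h''
            · exact hPmax i h''
            · exact hQmax i h''
          have hstep := cong_gap hs.2 (show s i < s i0 by omega)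
          rw [hi0] at hstep
          linarith
      · have hgi : g i = 0 := by rw [hgeval i, if_neg h0, if_neg h1]
        rw [hgi]
        linarith
  have hwin_lo : ∀ i, minC n s + 2*((n:ℤ)+1) ≤ s i + ((n:ℤ)+1) * g i := by
    intro i
    have hge := minC_le s i
    by_cases h0 : s i = minC n s
    · have hgi : g i = 2 := by rw [hgeval i, if_pos h0]
      rw [hgi, h0]
      linarith
    · by_cases h1 : (s i = minC n s + ((n:ℤ)+1) ∨ i ∈ P ∪ Q)
      · have hgi : g i = 1 := by rw [hgeval i, if_neg h0, if_pos h1]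
        rw [hgi]
        rcases h1 with h' | h'
        · rw [h']; linarith
        · have hstep := cong_gap hs.2 (show s j0 < s i by omega)
          rw [hj0] at hstep
          linarith
      · have hgi : g i = 0 := by rw [hgeval i, if_neg h0, if_neg h1]
        have h1a : s i ≠ minC n s + ((n:ℤ)+1) := fun h' => h1 (Or.inl h')
        have hstep1 := cong_gap hs.2 (show s j0 < s i by omega)
        have hdvd : ((n:ℤ)+1) ∣ s i - s j0 := hs.2 i j0
        have hdvd2 : ((n:ℤ)+1) ∣ (s i - s j0) - ((n:ℤ)+1) := dvd_sub hdvd dvd_rfl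
        have hpos2 : 0 < (s i - s j0) - ((n:ℤ)+1) := by omega
        have hstep2 := Int.le_of_dvd hpos2 hdvd2
        rw [hgi]
        linarith
  have hub : maxC n c ≤ minC n s + ((m:ℤ)+1)*((n:ℤ)+1) - ((P.card:ℤ) + Y.card) :=
    maxC_le _ _ (fun i => by rw [hcs i]; linarith [hwin_hi i])
  have hlb : minC n s + 2*((n:ℤ)+1) - ((P.card:ℤ) + Y.card) ≤ minC n c :=
    le_minC _ _ (fun i => by rw [hcs i]; linarith [hwin_lo i])
  have hupper : Hd n c ≤ ((m:ℤ) - 1) * ((n:ℤ)+1) := by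
    unfold Hd
    linarith [hub, hlb]
  have hcY_edge : isEdge n (eVec n Y) := isEdge_eVec hY1 hY2
  have hlip := hd_lip2 hcY_edge a
  rw [← hc] at hlip
  have hlower : ((m:ℤ) - 1) * ((n:ℤ)+1) ≤ Hd n c := by
    rw [hda] at hlip
    linarith [hlip]
  exact ⟨c, inV_add ha (inV_eVec Y), by rw [hca]; exact hcY_edge,
    by rw [hcb]; exact isEdge_eVec hZ1 hZ2, le_antisymm hupper hlower⟩

end helpers6

/-- G is vertex-transitive under translations by V, and is weakly
modular: triangle and quadrangle conditions hold at every base vertex. -/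
theorem stmt10 (n : ℕ) (hn : 1 ≤ n) :
    (∀ (v : Fin (n+1) → ℤ), inV n v → ∀ x y : {x : Fin (n+1) → ℤ // inV n x},
      ∀ (hx' : inV n (x.1 + v)) (hy' : inV n (y.1 + v)),
        ((G n).Adj x y ↔ (G n).Adj ⟨x.1 + v, hx'⟩ ⟨y.1 + v, hy'⟩)) ∧
    (∀ (v u w : {x : Fin (n+1) → ℤ // inV n x}) (m : ℕ), 1 ≤ m →
      (G n).Adj u w → (G n).dist u v = m → (G n).dist w v = m →
        ∃ t, (G n).Adj u t ∧ (G n).Adj w t ∧ (G n).dist t v = m - 1) ∧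
    (∀ (v u w s : {x : Fin (n+1) → ℤ // inV n x}) (m : ℕ), 1 ≤ m →
      (G n).Adj s u → (G n).Adj s w →
      (G n).dist u v = m → (G n).dist w v = m → (G n).dist s v = m + 1 →
        ∃ t, (G n).Adj u t ∧ (G n).Adj w t ∧ (G n).dist t v = m - 1) := by
  refine ⟨?_, ?_, ?_⟩
  · intro v hv x y hx' hy'
    have heq : (y.1 + v) - (x.1 + v) = y.1 - x.1 := by funext i; simp
    show isEdge n (y.1 - x.1) ↔ isEdge n ((y.1 + v) - (x.1 + v))
    rw [heq]
  · -- triangle condition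
    intro v u w m hm hadj hdu hdw
    have ha : inV n (fun i => u.1 i - v.1 i) := inV_sub v.2 u.2
    have hb : inV n (fun i => w.1 i - v.1 i) := inV_sub v.2 w.2
    have hHa : Hd n (fun i => u.1 i - v.1 i) = (m:ℤ) * ((n:ℤ)+1) :=
      dist_to_hd v u m (by rwa [SimpleGraph.dist_comm])
    have hHb : Hd n (fun i => w.1 i - v.1 i) = (m:ℤ) * ((n:ℤ)+1) :=
      dist_to_hd v w m (by rwa [SimpleGraph.dist_comm])
    have hedge : isEdge n (fun i => (w.1 i - v.1 i) - (u.1 i - v.1 i)) := by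
      have heq : (fun i => (w.1 i - v.1 i) - (u.1 i - v.1 i)) = w.1 - u.1 := by
        funext i
        show (w.1 i - v.1 i) - (u.1 i - v.1 i) = w.1 i - u.1 i
        ring
      rw [heq]
      exact hadj
    obtain ⟨c, hcV, hcu, hcw, hcH⟩ := triangle_diff ha hb m hm hHa hHb hedge
    refine ⟨⟨fun i => v.1 i + c i, inV_add v.2 hcV⟩, ?_, ?_, ?_⟩
    · show isEdge n ((fun i => v.1 i + c i) - u.1)
      have heq2 : ((fun i => v.1 i + c i) - u.1) = (fun i => c i - (u.1 i - v.1 i)) := by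
        funext i
        show v.1 i + c i - u.1 i = c i - (u.1 i - v.1 i)
        ring
      rw [heq2]
      exact hcu
    · show isEdge n ((fun i => v.1 i + c i) - w.1)
      have heq2 : ((fun i => v.1 i + c i) - w.1) = (fun i => c i - (w.1 i - v.1 i)) := by
        funext i
        show v.1 i + c i - w.1 i = c i - (w.1 i - v.1 i)
        ring
      rw [heq2]
      exact hcw
    · rw [SimpleGraph.dist_comm]
      apply dist_formula
      have heq2 : (fun i => (fun j => v.1 j + c j) i - v.1 i) = c := by
        funext i
        show v.1 i + c i - v.1 i = c i
        ring
      rw [heq2, hcH, Nat.cast_sub hm]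
      norm_num
  · -- quadrangle condition
    intro v u w s m hm hadj1 hadj2 hdu hdw hds
    have ha : inV n (fun i => u.1 i - v.1 i) := inV_sub v.2 u.2
    have hb : inV n (fun i => w.1 i - v.1 i) := inV_sub v.2 w.2
    have hsV : inV n (fun i => s.1 i - v.1 i) := inV_sub v.2 s.2
    have hHa : Hd n (fun i => u.1 i - v.1 i) = (m:ℤ) * ((n:ℤ)+1) :=
      dist_to_hd v u m (by rwa [SimpleGraph.dist_comm])
    have hHb : Hd n (fun i => w.1 i - v.1 i) = (m:ℤ) * ((n:ℤ)+1) :=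
      dist_to_hd v w m (by rwa [SimpleGraph.dist_comm])
    have hHs : Hd n (fun i => s.1 i - v.1 i) = ((m:ℤ)+1) * ((n:ℤ)+1) := by
      have := dist_to_hd v s (m+1) (by rwa [SimpleGraph.dist_comm])
      rw [this]
      push_cast
      ring
    have hedge1 : isEdge n (fun i => (u.1 i - v.1 i) - (s.1 i - v.1 i)) := by
      have heq : (fun i => (u.1 i - v.1 i) - (s.1 i - v.1 i)) = u.1 - s.1 := by
        funext i
        show (u.1 i - v.1 i) - (s.1 i - v.1 i) = u.1 i - s.1 i
        ring
      rw [heq]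
      exact hadj1
    have hedge2 : isEdge n (fun i => (w.1 i - v.1 i) - (s.1 i - v.1 i)) := by
      have heq : (fun i => (w.1 i - v.1 i) - (s.1 i - v.1 i)) = w.1 - s.1 := by
        funext i
        show (w.1 i - v.1 i) - (s.1 i - v.1 i) = w.1 i - s.1 i
        ring
      rw [heq]
      exact hadj2
    obtain ⟨c, hcV, hcu, hcw, hcH⟩ := quad_diff ha hb hsV m hm hHa hHb hHs hedge1 hedge2
    refine ⟨⟨fun i => v.1 i + c i, inV_add v.2 hcV⟩, ?_, ?_, ?_⟩
    · show isEdge n ((fun i => v.1 i + c i) - u.1)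
      have heq2 : ((fun i => v.1 i + c i) - u.1) = (fun i => c i - (u.1 i - v.1 i)) := by
        funext i
        show v.1 i + c i - u.1 i = c i - (u.1 i - v.1 i)
        ring
      rw [heq2]
      exact hcu
    · show isEdge n ((fun i => v.1 i + c i) - w.1)
      have heq2 : ((fun i => v.1 i + c i) - w.1) = (fun i => c i - (w.1 i - v.1 i)) := by
        funext i
        show v.1 i + c i - w.1 i = c i - (w.1 i - v.1 i)
        ring
      rw [heq2]
      exact hcw
    · rw [SimpleGraph.dist_comm]
      apply dist_formula
      have heq2 : (fun i => (fun j => v.1 j + c j) i - v.1 i) = c := by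
        funext i
        show v.1 i + c i - v.1 i = c i
        ring
      rw [heq2, hcH, Nat.cast_sub hm]
      norm_num
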